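/- Let a and b be coprime positive integers, b ≥ 2. With S_{(a;b)}(t) = (1/b)∑_{j=1}^{b-1} ξ_b^{jt}/(1−ξ_b^{ja}), we have b·S_{(a;b)}(t) = −∑_{k=1}^{b−1} k·S_b(t+ka), where S_b(s) = 1−1/b if b | s and −1/b otherwise. -/

import Mathlib

noncomputable def xi (b : ℕ) : ℂ := Complex.exp (2 * Real.pi * Complex.I / b)

noncomputable def S1 (a b : ℕ) (t : ℤ) : ℂ :=
  (b : ℂ)⁻¹ * ∑ j ∈ Finset.Ico 1 b, xi b ^ ((j : ℤ) * t) / (1 - xi b ^ ((j : ℤ) * (a : ℤ)))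

/-- The 0-dimensional Fourier–Dedekind sum, in closed form. -/
noncomputable def Sb (b : ℕ) (t : ℤ) : ℂ :=
  if (b : ℤ) ∣ t then 1 - (b : ℂ)⁻¹ else -(b : ℂ)⁻¹

lemma xi_ne_zero (b : ℕ) : xi b ≠ 0 := Complex.exp_ne_zero _

lemma xi_zpow_eq_one_iff (b : ℕ) (hb : 0 < b) (s : ℤ) :
    xi b ^ s = 1 ↔ (b : ℤ) ∣ s := by
  have hbC : (b : ℂ) ≠ 0 := Nat.cast_ne_zero.mpr hb.ne'
  have hpi : (2 * Real.pi * Complex.I : ℂ) ≠ 0 := by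
    simp [Real.pi_ne_zero, Complex.I_ne_zero, two_ne_zero]
  rw [xi, ← Complex.exp_int_mul, Complex.exp_eq_one_iff]
  constructor
  · rintro ⟨n, hn⟩
    refine ⟨n, ?_⟩
    have h2 : (s : ℂ) * (2 * Real.pi * Complex.I)
        = ((n * b : ℤ) : ℂ) * (2 * Real.pi * Complex.I) := by
      push_cast
      field_simp at hn
      linear_combination (2 * Real.pi * Complex.I) * hn
    have := mul_right_cancel₀ hpi h2
    rw [mul_comm]; exact_mod_cast this
  · rintro ⟨n, rfl⟩
    exact ⟨n, by push_cast; field_simp⟩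

lemma xi_zpow_b (b : ℕ) (hb : 0 < b) : xi b ^ (b : ℤ) = 1 :=
  (xi_zpow_eq_one_iff b hb b).mpr dvd_rfl

lemma myDerivSum (n : ℕ) (z : ℂ) :
    (z - 1) * ∑ k ∈ Finset.range n, (k : ℂ) * z ^ k
      = ((n : ℂ) - 1) * z ^ n - ∑ k ∈ Finset.range n, z ^ k + 1 := by
  induction n with
  | zero => simp
  | succ m ih =>
    rw [Finset.sum_range_succ, Finset.sum_range_succ]
    push_cast
    ring_nf
    ring_nf at ih
    linear_combination ih

lemma sum_k_pow (b : ℕ) (hb : 0 < b) (z : ℂ) (hz : z ≠ 1) (hzb : z ^ b = 1) :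
    (∑ k ∈ Finset.Ico 1 b, (k : ℂ) * z ^ k) = (b : ℂ) / (z - 1) := by
  have hz1 : z - 1 ≠ 0 := sub_ne_zero.mpr hz
  have hgeom : ∑ k ∈ Finset.range b, z ^ k = 0 := by
    rw [geom_sum_eq hz b, hzb]; simp
  have h1 : (∑ k ∈ Finset.Ico 1 b, (k : ℂ) * z ^ k) = ∑ k ∈ Finset.range b, (k : ℂ) * z ^ k := by
    rw [Finset.range_eq_Ico, Finset.sum_eq_sum_Ico_succ_bot hb]
    simp
  have h2 := myDerivSum b z
  rw [hgeom] at h2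
  rw [h1, eq_div_iff hz1, mul_comm, h2, hzb]
  ring

lemma Sb_eq (b : ℕ) (hb : 0 < b) (s : ℤ) :
    Sb b s = (b : ℂ)⁻¹ * ∑ j ∈ Finset.Ico 1 b, xi b ^ ((j : ℤ) * s) := by
  have hbC : (b : ℂ) ≠ 0 := Nat.cast_ne_zero.mpr hb.ne'
  set w := xi b ^ s with hw
  have hterm : ∀ j : ℕ, xi b ^ ((j : ℤ) * s) = w ^ j := by
    intro j
    rw [hw, mul_comm, zpow_mul, zpow_natCast]
  simp only [hterm]
  have hrange : ∑ j ∈ Finset.range b, w ^ j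
      = (if (b : ℤ) ∣ s then (b : ℂ) else 0) := by
    split_ifs with hd
    · have : w = 1 := (xi_zpow_eq_one_iff b hb s).mpr hd
      simp [this]
    · have hw1 : w ≠ 1 := fun hc => hd ((xi_zpow_eq_one_iff b hb s).mp hc)
      have hwb : w ^ b = 1 := by
        rw [hw, ← zpow_natCast, ← zpow_mul, show s * (b : ℤ) = (b : ℤ) * s by ring,
          zpow_mul, xi_zpow_b b hb, one_zpow]
      rw [geom_sum_eq hw1 b, hwb]; simp
  have hsplit : ∑ j ∈ Finset.Ico 1 b, w ^ j = (∑ j ∈ Finset.range b, w ^ j) - 1 := by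
    rw [Finset.range_eq_Ico, Finset.sum_eq_sum_Ico_succ_bot hb]
    simp
  rw [hsplit, hrange, Sb]
  split_ifs with hd
  · field_simp
  · field_simp; ring

/-- `b·S_{(a;b)}(t) = −∑_{k=1}^{b−1} k·S_b(t+ka)`. -/
theorem stmt4 (a b : ℕ) (ha : 0 < a) (hb : 2 ≤ b) (h : Nat.Coprime a b) (t : ℤ) :
    (b : ℂ) * S1 a b t = -∑ k ∈ Finset.Ico 1 b, (k : ℂ) * Sb b (t + k * a) := by
  have hb0 : 0 < b := by omega
  have hbC : (b : ℂ) ≠ 0 := Nat.cast_ne_zero.mpr hb0.ne'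
  have hx0 : xi b ≠ 0 := xi_ne_zero b
  have key : ∀ j ∈ Finset.Ico 1 b,
      xi b ^ ((j : ℤ) * t) / (1 - xi b ^ ((j : ℤ) * (a : ℤ)))
        = -(b : ℂ)⁻¹ * ∑ k ∈ Finset.Ico 1 b, (k : ℂ) * xi b ^ ((j : ℤ) * (t + (k : ℤ) * a)) := by
    intro j hj
    simp only [Finset.mem_Ico] at hj
    set w := xi b ^ ((j : ℤ) * (a : ℤ)) with hwdef
    have hw1 : w ≠ 1 := by
      intro hc
      have hd : (b : ℤ) ∣ (j : ℤ) * (a : ℤ) := (xi_zpow_eq_one_iff b hb0 _).mp hc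
      have hd' : b ∣ j * a := by exact_mod_cast hd
      have hdj : b ∣ j := (Nat.Coprime.dvd_of_dvd_mul_right (h.symm)) hd'
      have := Nat.le_of_dvd (by omega) hdj
      omega
    have hwb : w ^ b = 1 := by
      rw [hwdef, ← zpow_natCast, ← zpow_mul,
        show (j : ℤ) * (a : ℤ) * (b : ℤ) = (b : ℤ) * ((j : ℤ) * a) by ring,
        zpow_mul, xi_zpow_b b hb0, one_zpow]
    have hexp : ∀ k : ℕ, xi b ^ ((j : ℤ) * (t + (k : ℤ) * a))
        = xi b ^ ((j : ℤ) * t) * w ^ k := by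
      intro k
      rw [hwdef,
        show (j : ℤ) * (t + (k : ℤ) * a) = (j : ℤ) * t + ((j : ℤ) * (a : ℤ)) * k by ring,
        zpow_add₀ hx0]
      congr 1
      rw [zpow_mul, zpow_natCast]
    simp only [hexp]
    have hfact : ∑ k ∈ Finset.Ico 1 b, (k : ℂ) * (xi b ^ ((j : ℤ) * t) * w ^ k)
        = xi b ^ ((j : ℤ) * t) * ∑ k ∈ Finset.Ico 1 b, (k : ℂ) * w ^ k := by
      rw [Finset.mul_sum]; exact Finset.sum_congr rfl fun k _ => by ring
    have hsub : 1 - w ≠ 0 := sub_ne_zero.mpr (Ne.symm hw1)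
    have hsub' : w - 1 ≠ 0 := sub_ne_zero.mpr hw1
    rw [hfact, sum_k_pow b hb0 w hw1 hwb]
    field_simp
    ring
  calc (b : ℂ) * S1 a b t
      = ∑ j ∈ Finset.Ico 1 b, xi b ^ ((j : ℤ) * t) / (1 - xi b ^ ((j : ℤ) * (a : ℤ))) := by
        rw [S1, ← mul_assoc, mul_inv_cancel₀ hbC, one_mul]
    _ = ∑ j ∈ Finset.Ico 1 b, (-(b : ℂ)⁻¹ * ∑ k ∈ Finset.Ico 1 b, (k : ℂ) * xi b ^ ((j : ℤ) * (t + (k : ℤ) * a))) :=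
        Finset.sum_congr rfl key
    _ = -∑ k ∈ Finset.Ico 1 b, (k : ℂ) * Sb b (t + k * a) := by
        simp only [Sb_eq b hb0]
        simp only [Finset.mul_sum, ← Finset.sum_neg_distrib, neg_mul]
        rw [Finset.sum_comm]
        exact Finset.sum_congr rfl fun k _ => Finset.sum_congr rfl fun j _ => by ring
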